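/- For every integer b ≥ 2 and prime p, the matrix A = [[p², (p−1)·p^{1−b}],[0, p]] ∈ M₂(ℚ) satisfies Aⁿ = [[p^{2n}, p^{n−b}(pⁿ−1)],[0, pⁿ]] for all n ≥ 1, and hence S(A) = {0} ∪ {n ∈ ℕ : n ≥ b}, the ordinary numerical semigroup S_b. -/

import Mathlib

/-- The exponent set of a rational square matrix: those `n` with the `n`-th power integral. -/
def expSet {ι : Type*} [Fintype ι] [DecidableEq ι] (A : Matrix ι ι ℚ) : Set ℕ :=
  {n | ∀ i j, ((A ^ n) i j).den = 1}

theorem ordinary_semigroup_dim_two (b : ℕ) (hb : 2 ≤ b) (p : ℕ) (hp : p.Prime) :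
    (∀ n : ℕ, 1 ≤ n →
      (!![(p : ℚ) ^ 2, ((p : ℚ) - 1) * (p : ℚ) ^ ((1 : ℤ) - b); 0, (p : ℚ)]) ^ n =
        !![(p : ℚ) ^ (2 * n), (p : ℚ) ^ ((n : ℤ) - b) * ((p : ℚ) ^ n - 1); 0, (p : ℚ) ^ n]) ∧
    expSet (!![(p : ℚ) ^ 2, ((p : ℚ) - 1) * (p : ℚ) ^ ((1 : ℤ) - b); 0, (p : ℚ)]) =
      {0} ∪ {n : ℕ | b ≤ n} := by
  have hp0 : (p : ℚ) ≠ 0 := Nat.cast_ne_zero.mpr hp.pos.ne'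
  have hsub : ∀ m : ℕ, (p : ℚ) ^ ((m : ℤ) - b) = (p : ℚ) ^ m * (p : ℚ) ^ (-(b : ℤ)) := by
    intro m
    rw [sub_eq_add_neg, zpow_add₀ hp0, zpow_natCast]
  have h1b : (p : ℚ) ^ ((1 : ℤ) - b) = (p : ℚ) * (p : ℚ) ^ (-(b : ℤ)) := by
    rw [sub_eq_add_neg, zpow_add₀ hp0, zpow_one]
  have key : ∀ n : ℕ, 1 ≤ n →
      (!![(p : ℚ) ^ 2, ((p : ℚ) - 1) * (p : ℚ) ^ ((1 : ℤ) - b); 0, (p : ℚ)]) ^ n =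
        !![(p : ℚ) ^ (2 * n), (p : ℚ) ^ ((n : ℤ) - b) * ((p : ℚ) ^ n - 1); 0, (p : ℚ) ^ n] := by
    intro n hn
    induction n with
    | zero => omega
    | succ n ih =>
      rcases Nat.eq_zero_or_pos n with h0 | h1
      · subst h0
        rw [pow_one, h1b, hsub 1]
        generalize (p : ℚ) ^ (-(b : ℤ)) = T
        ext i j
        fin_cases i <;> fin_cases j <;>
          simp <;> push_cast <;> ring
      · rw [pow_succ, ih h1, h1b, hsub n, hsub (n + 1)]
        generalize (p : ℚ) ^ (-(b : ℤ)) = T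
        ext i j
        fin_cases i <;> fin_cases j <;>
          simp [Matrix.mul_apply, Fin.sum_univ_two] <;> push_cast <;> ring
  refine ⟨key, ?_⟩
  ext n
  simp only [Set.mem_union, Set.mem_singleton_iff, Set.mem_setOf_eq, expSet]
  rcases Nat.eq_zero_or_pos n with h0 | h1
  · subst h0
    simp only [pow_zero, true_or, iff_true]
    intro i j
    rcases eq_or_ne i j with h | h <;> simp [Matrix.one_apply, h]
  · rw [key n h1]
    constructor
    · intro h
      right
      by_contra hbn
      push_neg at hbn
      have hmain := h 0 1
      simp only [Matrix.of_apply, Matrix.cons_val', Matrix.cons_val_zero, Matrix.cons_val_one, Matrix.head_cons,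
        Matrix.empty_val', Matrix.cons_val_fin_one, Matrix.head_fin_const] at hmain
      set q : ℚ := (p : ℚ) ^ ((n : ℤ) - b) * ((p : ℚ) ^ n - 1) with hq
      have hz : (q.num : ℚ) = q := (Rat.den_eq_one_iff q).mp hmain
      have hmul : (q.num : ℚ) * (p : ℚ) ^ (b - n) = (p : ℚ) ^ n - 1 := by
        rw [hz, hq]
        have h2 : ((b - n : ℕ) : ℤ) = (b : ℤ) - n := by omega
        rw [← zpow_natCast (p : ℚ) (b - n), h2, mul_right_comm, ← zpow_add₀ hp0]
        simp
      have hmulZ : q.num * (p : ℤ) ^ (b - n) = (p : ℤ) ^ n - 1 := by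
        exact_mod_cast hmul
      have hpdvd : (p : ℤ) ∣ (p : ℤ) ^ n - 1 := by
        rw [← hmulZ]
        exact Dvd.dvd.mul_left (dvd_pow_self _ (by omega)) _
      have hpn : (p : ℤ) ∣ (p : ℤ) ^ n := dvd_pow_self _ (by omega)
      have h1' : (p : ℤ) ∣ 1 := by simpa using dvd_sub hpn hpdvd
      have := Int.le_of_dvd one_pos h1'
      have hp2 : (2 : ℤ) ≤ p := by exact_mod_cast hp.two_le
      omega
    · rintro (h | hbn)
      · omega
      intro i j
      have hcast : (p : ℚ) ^ ((n : ℤ) - b) * ((p : ℚ) ^ n - 1) =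
          (((p ^ (n - b) * (p ^ n - 1) : ℤ)) : ℚ) := by
        have h2 : ((n : ℤ)) - b = ((n - b : ℕ) : ℤ) := by omega
        rw [h2, zpow_natCast]
        push_cast
        ring
      fin_cases i <;> fin_cases j <;>
        simp only [Matrix.cons_val', Matrix.cons_val_zero, Matrix.cons_val_one, Matrix.head_cons,
          Matrix.empty_val', Matrix.cons_val_fin_one, Matrix.head_fin_const] <;>
        first
        | exact Rat.den_zero
        | (rw [hcast]; exact Rat.den_intCast _)
        | (rw [show ((p:ℚ))^(2*n) = ((p^(2*n) : ℕ) : ℚ) by push_cast; ring]; exact Rat.den_natCast _)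
        | (rw [show ((p:ℚ))^n = ((p^n : ℕ) : ℚ) by push_cast; ring]; exact Rat.den_natCast _)
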